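/- Let G be a complex Lie group whose Lie algebra 𝔤 is unimodular, with left-invariant (1,0)-frame Z₁,…,Z_n and left-invariant Hermitian metric g. Then the Chern torsion T, whose components satisfy T^k_{ij} Z_k = -[Z_i, Z_j], has vanishing trace: T^r_{i r} = 0 for every i; i.e., g is balanced. -/

import Mathlib

open scoped BigOperators

/-- On a complex Lie group with unimodular Lie algebra `𝔤` (i.e. `tr (ad X) = 0` for all
`X`), a left-invariant `(1,0)`-frame `Z₁,…,Z_n` (a basis `B` of `𝔤`) and a left-invariant
Hermitian metric `g`, the Chern torsion, whose components satisfy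
`T_{ij}^k Z_k = -[Z_i, Z_j]`, has vanishing trace `T_{ir}^r = 0`; i.e. `g` is balanced. -/
theorem stmt_19 {L : Type*} [LieRing L] [LieAlgebra ℂ L] (n : ℕ)
    (B : Module.Basis (Fin n) ℂ L)
    (g : Fin n → Fin n → ℂ)
    (hherm : ∀ i j, g i j = starRingEnd ℂ (g j i))
    (hunimod : ∀ X : L, LinearMap.trace ℂ L (LieAlgebra.ad ℂ L X) = 0)
    (T : Fin n → Fin n → Fin n → ℂ)
    (hT : ∀ i j, (∑ k, T i j k • B k) = -⁅B i, B j⁆) :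
    ∀ i, (∑ r, T i r r) = 0 := by
  intro i
  have hTc : ∀ j k, T i j k = B.repr ⁅B j, B i⁆ k := by
    intro j k
    have := congrArg (fun x => B.repr x k) (hT i j)
    simpa [Finsupp.single_apply, Finset.sum_ite_eq'] using this
  have htr := hunimod (B i)
  rw [LinearMap.trace_eq_matrix_trace ℂ B] at htr
  have : (∑ r, B.repr ⁅B i, B r⁆ r) = 0 := by
    simpa [Matrix.trace, Matrix.diag, LinearMap.toMatrix_apply,
      LieAlgebra.ad_apply] using htr
  have h2 : ∀ r, (B.repr ⁅B r, B i⁆) r = -(B.repr ⁅B i, B r⁆) r := by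
    intro r; rw [← lie_skew, map_neg]; rfl
  simp only [hTc, h2]
  rw [Finset.sum_neg_distrib, this, neg_zero]
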